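/- Let F be the Arikan kernel over F_2, m ≥ 1, A = F^{⊗m}, and 0 ≤ r < m. Let R_r ⊆ F_2^{2^m} be the linear span of the rows of A whose indices i satisfy wt(i) > r (the Reed–Muller code of order m−r−1). If C ⊆ R_r is any linear subcode, then the dynamic frozen index set of C with respect to A contains every index of weight at most r: F_A(C) ⊇ { i : 0 ≤ i < 2^m, wt(i) ≤ r }. -/

import Mathlib

/-- The binary weight `wt i`: the number of ones in the binary expansion of `i`. -/
def wt (i : ℕ) : ℕ := (Nat.digits 2 i).sum

/-- The Arikan kernel: the 2×2 matrix over `F_2` with rows `(1,0)` and `(1,1)`. -/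
def arikanKernel : Matrix (Fin 2) (Fin 2) (ZMod 2) := !![1, 0; 1, 1]

/-- The `m`-fold Kronecker power of the Arikan kernel, a `2^m × 2^m` matrix over `F_2`.
The index pair `(a, b)` of the Kronecker product `F ⊗ F^{⊗m}` is identified with the
integer `a·2^m + b`, i.e. `a = i / 2^m` and `b = i % 2^m`. -/
def arikanKronPow : (m : ℕ) → Matrix (Fin (2 ^ m)) (Fin (2 ^ m)) (ZMod 2)
  | 0 => 1
  | m + 1 => Matrix.of fun i j =>
      arikanKernel ⟨i.val / 2 ^ m, Nat.div_lt_of_lt_mul (by rw [← pow_succ]; exact i.isLt)⟩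
          ⟨j.val / 2 ^ m, Nat.div_lt_of_lt_mul (by rw [← pow_succ]; exact j.isLt)⟩ *
        arikanKronPow m ⟨i.val % 2 ^ m, Nat.mod_lt _ (by positivity)⟩
          ⟨j.val % 2 ^ m, Nat.mod_lt _ (by positivity)⟩


lemma arikanKernel_lt {a b : Fin 2} (h : a.val < b.val) : arikanKernel a b = 0 := by
  fin_cases a <;> fin_cases b <;> simp_all [arikanKernel]

lemma arikanKernel_diag (a : Fin 2) : arikanKernel a a = 1 := by
  fin_cases a <;> simp [arikanKernel]

lemma kron_lt : ∀ {m : ℕ} (i j : Fin (2 ^ m)), i.val < j.val → arikanKronPow m i j = 0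
  | 0, i, j, h => absurd h (by have := i.isLt; have := j.isLt; simp only [pow_zero] at *; omega)
  | m + 1, i, j, h => by
      show arikanKernel _ _ * arikanKronPow m _ _ = 0
      rcases lt_or_eq_of_le (Nat.div_le_div_right (le_of_lt h) (c := 2 ^ m)) with hd | hd
      · rw [arikanKernel_lt hd, zero_mul]
      · have hm : i.val % 2 ^ m < j.val % 2 ^ m := by
          have h1 := Nat.div_add_mod i.val (2 ^ m)
          rw [hd] at h1
          have h2 := Nat.div_add_mod j.val (2 ^ m)
          omega
        rw [kron_lt _ _ hm, mul_zero]

lemma kron_diag : ∀ {m : ℕ} (i : Fin (2 ^ m)), arikanKronPow m i i = 1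
  | 0, i => by simp [arikanKronPow, Matrix.one_apply_eq]
  | m + 1, i => by
      show arikanKernel _ _ * arikanKronPow m _ _ = 1
      rw [arikanKernel_diag, kron_diag, one_mul]

lemma kron_isUnit (m : ℕ) : IsUnit (arikanKronPow m) := by
  rw [Matrix.isUnit_iff_isUnit_det]
  have : (arikanKronPow m).det = ∏ i, arikanKronPow m i i :=
    Matrix.det_of_lowerTriangular _ (fun i j h => kron_lt i j (by exact h))
  rw [this]
  simp [kron_diag]

/-- The dynamic frozen index set `F_A(C)` of a linear code `C ⊆ F_q^n` with respect to an
invertible matrix `A`: the set of indices `t` that arise as the last nonzero position of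
some nonzero vector `v` in the orthogonal complement (w.r.t. the standard bilinear form)
of the subspace `{u : uA ∈ C}`. -/
def frozenSet {F : Type*} [Field F] {n : ℕ} (A : Matrix (Fin n) (Fin n) F)
    (C : Submodule F (Fin n → F)) : Set (Fin n) :=
  {t | ∃ v : Fin n → F,
    (∀ u : Fin n → F, Matrix.vecMul u A ∈ C → ∑ s, u s * v s = 0) ∧
    v ≠ 0 ∧ v t ≠ 0 ∧ ∀ s, t < s → v s = 0}

/-- Let `A = F^{⊗m}` and let `R_r` be the span of the rows of `A` whose
indices have binary weight `> r` (the Reed–Muller code of order `m−r−1`). If `C ⊆ R_r` is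
any linear subcode, then `F_A(C)` contains every index of weight at most `r`. -/
theorem frozenSet_subcode_reed_muller {m r : ℕ} (hm : 1 ≤ m) (hr : r < m)
    (C : Submodule (ZMod 2) (Fin (2 ^ m) → ZMod 2))
    (hC : C ≤ Submodule.span (ZMod 2)
      {v | ∃ i : Fin (2 ^ m), r < wt i.val ∧ v = arikanKronPow m i}) :
    {i : Fin (2 ^ m) | wt i.val ≤ r} ⊆ frozenSet (arikanKronPow m) C := by
  intro t ht
  simp only [Set.mem_setOf_eq] at ht
  simp only [frozenSet, Set.mem_setOf_eq]
  refine ⟨Pi.single t 1, ?_, ?_, ?_, ?_⟩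
  · intro u hu
    have hinj : Function.Injective (arikanKronPow m).vecMul :=
      Matrix.vecMul_injective_iff_isUnit.2 (kron_isUnit m)
    set ℓ := (arikanKronPow m).vecMulLinear with hℓ
    have hsub : {v | ∃ i : Fin (2 ^ m), r < wt i.val ∧ v = arikanKronPow m i} ⊆
        ℓ '' {w | ∃ i : Fin (2 ^ m), r < wt i.val ∧ w = Pi.single i 1} := by
      rintro v ⟨i, hi, rfl⟩
      exact ⟨Pi.single i 1, ⟨i, hi, rfl⟩, by
        simp [hℓ, Matrix.coe_vecMulLinear, Matrix.single_one_vecMul]; rfl⟩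
    have hu' : Matrix.vecMul u (arikanKronPow m) ∈
        Submodule.map ℓ (Submodule.span (ZMod 2)
          {w | ∃ i : Fin (2 ^ m), r < wt i.val ∧ w = Pi.single i 1}) := by
      rw [Submodule.map_span]
      exact Submodule.span_mono hsub (hC hu)
    obtain ⟨w, hw, hwu⟩ := hu'
    have hwu' : w = u := hinj (by simpa [hℓ, Matrix.coe_vecMulLinear] using hwu)
    have hw0 : w t = 0 := by
      have : Submodule.span (ZMod 2)
          {w | ∃ i : Fin (2 ^ m), r < wt i.val ∧ w = Pi.single i 1} ≤
          LinearMap.ker (LinearMap.proj (R := ZMod 2) (φ := fun _ : Fin (2 ^ m) => ZMod 2) t) := by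
        rw [Submodule.span_le]
        rintro w ⟨i, hi, rfl⟩
        have hit : t ≠ i := fun h => by subst h; omega
        simp [LinearMap.mem_ker, Pi.single_eq_of_ne hit]
      simpa using this hw
    have : ∑ s, u s * Pi.single (M := fun _ : Fin (2 ^ m) => ZMod 2) t 1 s = u t := by
      simp [Pi.single_apply, mul_ite]
    rw [this, ← hwu', hw0]
  · intro h
    have := congrFun h t
    simp at this
  · simp
  · intro s hs
    exact Pi.single_eq_of_ne (M := fun _ : Fin (2 ^ m) => ZMod 2) (ne_of_lt hs).symm 1
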